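/- For any probability vector p with support Z̄, V ∈ ℝ^n, ε > 0, and V non-constant on Z̄ with p_{argmax} < 1, there is a unique ν* > max_{i∈Z̄} V_i with f(ν*) = ε. -/

import Mathlib

open Finset

private lemma variance_lt {n : ℕ} (S : Finset (Fin n)) (p x : Fin n → ℝ)
    (hp : ∀ i ∈ S, 0 ≤ p i) (hsum : ∑ i ∈ S, p i = 1)
    (i j : Fin n) (hi : i ∈ S) (hj : j ∈ S) (hpi : 0 < p i) (hpj : 0 < p j)
    (hx : x i ≠ x j) :
    (∑ k ∈ S, p k * x k)^2 < ∑ k ∈ S, p k * x k ^ 2 := by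
  set m := ∑ k ∈ S, p k * x k with hm
  have key : ∑ k ∈ S, p k * (x k - m)^2 = (∑ k ∈ S, p k * x k ^ 2) - m ^ 2 := by
    have h1 : ∀ k, p k * (x k - m)^2 = p k * x k ^2 - 2 * m * (p k * x k) + m^2 * p k := by
      intro k; ring
    simp_rw [h1, Finset.sum_add_distrib, Finset.sum_sub_distrib, ← Finset.mul_sum, hsum, ← hm]
    ring
  have hterm : ∀ k ∈ S, 0 ≤ p k * (x k - m)^2 := fun k hk =>
    mul_nonneg (hp k hk) (sq_nonneg _)
  have hne : x i ≠ m ∨ x j ≠ m := by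
    by_contra h; push_neg at h; exact hx (h.1.trans h.2.symm)
  have hpos : 0 < ∑ k ∈ S, p k * (x k - m)^2 := by
    rcases hne with h | h
    · exact Finset.sum_pos' hterm ⟨i, hi, mul_pos hpi (pow_pos (abs_pos.mpr (sub_ne_zero.mpr h)) 2 |>.trans_eq (by rw [sq_abs]) )⟩
    · exact Finset.sum_pos' hterm ⟨j, hj, mul_pos hpj (pow_pos (abs_pos.mpr (sub_ne_zero.mpr h)) 2 |>.trans_eq (by rw [sq_abs]) )⟩
  nlinarith [key, hpos]

private lemma deriv_formula {n : ℕ} (p V : Fin n → ℝ) (S : Finset (Fin n))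
    (hp : ∀ i ∈ S, 0 < p i) (hSne : S.Nonempty) (ν : ℝ) (hpos : ∀ i ∈ S, 0 < ν - V i) :
    HasDerivAt (fun ν => (∑ i ∈ S, p i * Real.log (ν - V i))
        + Real.log (∑ i ∈ S, p i / (ν - V i)))
      ((∑ i ∈ S, p i / (ν - V i)) + (-(∑ i ∈ S, p i / (ν - V i)^2))/(∑ i ∈ S, p i / (ν - V i))) ν := by
  have hg : HasDerivAt (fun ν => ∑ i ∈ S, p i * Real.log (ν - V i)) (∑ i ∈ S, p i / (ν - V i)) ν := by
    refine HasDerivAt.fun_sum fun i hi => ?_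
    have h := (((hasDerivAt_id ν).sub_const (V i)).log (ne_of_gt (hpos i hi))).const_mul (p i)
    simpa [mul_one_div, div_eq_mul_inv] using h
  have hh : HasDerivAt (fun ν => ∑ i ∈ S, p i / (ν - V i)) (-(∑ i ∈ S, p i / (ν - V i)^2)) ν := by
    have h := HasDerivAt.fun_sum (u := S) (x := ν)
      (A := fun i ν => p i * (ν - V i)⁻¹) (A' := fun i => p i * (-1/(ν - V i)^2))
      (fun i hi => (((hasDerivAt_id ν).sub_const (V i)).inv (ne_of_gt (hpos i hi))).const_mul (p i))
    have e1 : (fun ν => ∑ i ∈ S, p i / (ν - V i)) = fun ν => ∑ i ∈ S, p i * (ν - V i)⁻¹ := by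
      simp [div_eq_mul_inv]
    have e2 : (∑ i ∈ S, p i * (-1/(ν - V i)^2)) = -(∑ i ∈ S, p i / (ν - V i)^2) := by
      rw [← Finset.sum_neg_distrib]
      exact Finset.sum_congr rfl fun i _ => by ring
    rw [e1, ← e2]
    exact h
  have hspos : 0 < ∑ i ∈ S, p i / (ν - V i) :=
    Finset.sum_pos (fun i hi => div_pos (hp i hi) (hpos i hi)) hSne
  exact hg.add (hh.log (ne_of_gt hspos))


/-- Under the non-degeneracy assumptions, there is a unique
ν* > max_{i ∈ Z̄} V i with f(ν*) = ε. -/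
theorem exists_unique_root (n : ℕ) (p V : Fin n → ℝ) (M : ℝ)
    (hp0 : ∀ i, 0 ≤ p i) (hp1 : ∑ i, p i = 1)
    (hMmax : ∀ i, 0 < p i → V i ≤ M) (hMmem : ∃ i, 0 < p i ∧ V i = M)
    (hV : ∃ i j, 0 < p i ∧ 0 < p j ∧ V i ≠ V j)
    (hmass : ∑ i ∈ univ.filter (fun i => 0 < p i ∧ V i = M), p i < 1)
    (ε : ℝ) (hε : 0 < ε) :
    ∃! ν : ℝ, (∀ i, 0 < p i → V i < ν) ∧
      (∑ i ∈ univ.filter (fun i => 0 < p i), p i * Real.log (ν - V i))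
        + Real.log (∑ i ∈ univ.filter (fun i => 0 < p i), p i / (ν - V i)) = ε := by
  classical
  set S : Finset (Fin n) := univ.filter (fun i => 0 < p i) with hS
  obtain ⟨i₀, hpi₀, hVi₀⟩ := hMmem
  have hmemS : ∀ i, i ∈ S ↔ 0 < p i := by intro i; simp [hS]
  have hi₀S : i₀ ∈ S := (hmemS i₀).mpr hpi₀
  have hSne : S.Nonempty := ⟨i₀, hi₀S⟩
  have hpS : ∀ i ∈ S, 0 < p i := fun i hi => (hmemS i).mp hi
  have hSsum : ∑ i ∈ S, p i = 1 := by
    rw [hS, Finset.sum_filter_of_ne, hp1]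
    intro i _ hne
    exact lt_of_le_of_ne (hp0 i) (Ne.symm hne)
  set f : ℝ → ℝ := fun ν => (∑ i ∈ S, p i * Real.log (ν - V i))
      + Real.log (∑ i ∈ S, p i / (ν - V i)) with hf
  have hVM : ∀ i ∈ S, V i ≤ M := fun i hi => hMmax i (hpS i hi)
  have hposV : ∀ ν ∈ Set.Ioi M, ∀ i ∈ S, 0 < ν - V i := fun ν hν i hi =>
    sub_pos.mpr (lt_of_le_of_lt (hVM i hi) hν)
  -- strict antitone
  have hanti : StrictAntiOn f (Set.Ioi M) := by
    apply strictAntiOn_of_deriv_neg (convex_Ioi M)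
    · intro ν hν
      exact (deriv_formula p V S hpS hSne ν (hposV ν hν)).continuousAt.continuousWithinAt
    · intro ν hν
      rw [interior_Ioi] at hν
      have hd := deriv_formula p V S hpS hSne ν (hposV ν hν)
      rw [hd.deriv]
      set h1 := ∑ i ∈ S, p i / (ν - V i) with hh1
      set h2 := ∑ i ∈ S, p i / (ν - V i)^2 with hh2
      have h1pos : 0 < h1 :=
        Finset.sum_pos (fun i hi => div_pos (hpS i hi) (hposV ν hν i hi)) hSne
      have hlt : h1 ^ 2 < h2 := by
        obtain ⟨i, j, hpi, hpj, hVij⟩ := hV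
        have e1 : h1 = ∑ k ∈ S, p k * (ν - V k)⁻¹ := by
          rw [hh1]; exact Finset.sum_congr rfl fun k _ => div_eq_mul_inv _ _
        have e2 : h2 = ∑ k ∈ S, p k * ((ν - V k)⁻¹) ^ 2 := by
          rw [hh2]
          refine Finset.sum_congr rfl fun k _ => ?_
          rw [div_eq_mul_inv, inv_pow]
        rw [e1, e2]
        refine variance_lt S p (fun k => (ν - V k)⁻¹) (fun k hk => (hpS k hk).le) hSsum
          i j ((hmemS i).mpr hpi) ((hmemS j).mpr hpj) hpi hpj ?_
        intro hinv
        have := inv_injective hinv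
        exact hVij (by linarith)
      have : h1 + -h2 / h1 = (h1 ^ 2 - h2) / h1 := by field_simp; ring
      rw [this]
      exact div_neg_of_neg_of_pos (by linarith) h1pos
  -- point a near M with f a ≥ ε
  have hbound_a : ∃ a, M < a ∧ ε ≤ f a := by
    have hA : (univ.filter (fun i => 0 < p i ∧ V i = M)) = S.filter (fun i => V i = M) := by
      rw [hS, Finset.filter_filter]
    set q := ∑ i ∈ S.filter (fun i => V i = M), p i with hq
    have hq1 : q < 1 := by rw [hq, ← hA]; exact hmass
    have h1q : (0:ℝ) < 1 - q := by linarith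
    set C := (∑ i ∈ S.filter (fun i => ¬ V i = M), p i * Real.log (M - V i))
        + Real.log (p i₀) with hC
    set t := Real.exp ((C - ε) / (1 - q)) with ht
    have ht0 : 0 < t := Real.exp_pos _
    have hlogt : Real.log t = (C - ε) / (1 - q) := Real.log_exp _
    refine ⟨M + t, by linarith, ?_⟩
    have hνM : M < M + t := by linarith
    have hνMt : M + t - M = t := by ring
    -- lower bound for the log-sum term
    have hsum_ge : p i₀ / t ≤ ∑ i ∈ S, p i / (M + t - V i) := by
      have he : p i₀ / (M + t - V i₀) = p i₀ / t := by rw [hVi₀, hνMt]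
      calc p i₀ / t = p i₀ / (M + t - V i₀) := he.symm
        _ ≤ ∑ i ∈ S, p i / (M + t - V i) :=
          Finset.single_le_sum (f := fun i => p i / (M + t - V i))
            (fun i hi => (div_pos (hpS i hi) (hposV _ hνM i hi)).le) hi₀S
    have hlog2 : Real.log (p i₀) - Real.log t ≤ Real.log (∑ i ∈ S, p i / (M + t - V i)) := by
      rw [← Real.log_div (ne_of_gt hpi₀) (ne_of_gt ht0)]
      have hpos2 : 0 < p i₀ / t := div_pos hpi₀ ht0
      exact (Real.log_le_log_iff hpos2 (lt_of_lt_of_le hpos2 hsum_ge)).mpr hsum_ge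
    -- lower bound for the weighted-log term
    have hsplit := Finset.sum_filter_add_sum_filter_not S (fun i => V i = M)
        (fun i => p i * Real.log (M + t - V i))
    have hAterm : ∑ i ∈ S.filter (fun i => V i = M), p i * Real.log (M + t - V i)
        = q * Real.log t := by
      rw [hq, Finset.sum_mul]
      refine Finset.sum_congr rfl fun i hi => ?_
      have hVi : V i = M := (Finset.mem_filter.mp hi).2
      rw [hVi]
      congr 1
      ring
    have hBterm : ∑ i ∈ S.filter (fun i => ¬ V i = M), p i * Real.log (M - V i)
        ≤ ∑ i ∈ S.filter (fun i => ¬ V i = M), p i * Real.log (M + t - V i) := by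
      refine Finset.sum_le_sum fun i hi => ?_
      obtain ⟨hiS, hiV⟩ := Finset.mem_filter.mp hi
      have hVlt : V i < M := lt_of_le_of_ne (hVM i hiS) hiV
      have hp1' : 0 < M - V i := by linarith
      exact mul_le_mul_of_nonneg_left
        ((Real.log_le_log_iff hp1' (by linarith)).mpr (by linarith)) (hpS i hiS).le
    have hfinal : (q - 1) * Real.log t + C ≤ f (M + t) := by
      rw [hf]
      have : q * Real.log t
          + (∑ i ∈ S.filter (fun i => ¬ V i = M), p i * Real.log (M - V i))
          ≤ ∑ i ∈ S, p i * Real.log (M + t - V i) := by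
        rw [← hsplit, hAterm]
        linarith
      simp only
      linarith
    have harith : (q - 1) * Real.log t + C = ε := by
      rw [hlogt]
      field_simp
      ring
    linarith
  -- point b far with f b ≤ ε
  have hbound_b : ∀ a, M < a → ∃ b, a ≤ b ∧ f b ≤ ε := by
    intro a haM
    set m' := S.inf' hSne V with hm'
    have hm'le : ∀ i ∈ S, m' ≤ V i := fun i hi => Finset.inf'_le V hi
    have hm'M : m' ≤ M := le_of_le_of_eq (hm'le i₀ hi₀S) hVi₀
    have hexp : 1 < Real.exp ε := Real.one_lt_exp_iff.mpr hε
    set T := (M - m') / (Real.exp ε - 1) with hT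
    have hT0 : 0 ≤ T := div_nonneg (by linarith) (by linarith)
    set b := max (M + T) a + 1 with hb
    have hba : a ≤ b := by
      have := le_max_right (M + T) a
      linarith
    have hbM : M < b := lt_of_lt_of_le haM hba
    have hbT : M + T + 1 ≤ b := by
      have := le_max_left (M + T) a
      linarith
    have hbMpos : 0 < b - M := by linarith
    have hbm' : 0 < b - m' := by linarith
    refine ⟨b, hba, ?_⟩
    have h1 : ∑ i ∈ S, p i * Real.log (b - V i) ≤ Real.log (b - m') := by
      calc ∑ i ∈ S, p i * Real.log (b - V i)
          ≤ ∑ i ∈ S, p i * Real.log (b - m') := by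
            refine Finset.sum_le_sum fun i hi => ?_
            have h1' : 0 < b - V i := hposV b hbM i hi
            exact mul_le_mul_of_nonneg_left
              ((Real.log_le_log_iff h1' (by linarith [hm'le i hi])).mpr
                (by linarith [hm'le i hi])) (hpS i hi).le
        _ = Real.log (b - m') := by rw [← Finset.sum_mul, hSsum, one_mul]
    have h2 : ∑ i ∈ S, p i / (b - V i) ≤ 1 / (b - M) := by
      calc ∑ i ∈ S, p i / (b - V i) ≤ ∑ i ∈ S, p i / (b - M) := by
            refine Finset.sum_le_sum fun i hi => ?_
            exact div_le_div_of_nonneg_left (hp0 i) hbMpos (by linarith [hVM i hi])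
        _ = 1 / (b - M) := by rw [← Finset.sum_div, hSsum]
    have hsumpos : 0 < ∑ i ∈ S, p i / (b - V i) :=
      Finset.sum_pos (fun i hi => div_pos (hpS i hi) (hposV b hbM i hi)) hSne
    have h2' : Real.log (∑ i ∈ S, p i / (b - V i)) ≤ Real.log 1 - Real.log (b - M) := by
      rw [← Real.log_div one_ne_zero (ne_of_gt hbMpos)]
      exact (Real.log_le_log_iff hsumpos (div_pos one_pos hbMpos)).mpr h2
    have h3 : Real.log (b - m') - Real.log (b - M) ≤ ε := by
      rw [← Real.log_div (ne_of_gt hbm') (ne_of_gt hbMpos)]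
      rw [Real.log_le_iff_le_exp (div_pos hbm' hbMpos)]
      rw [div_le_iff₀ hbMpos]
      have hTeq : T * (Real.exp ε - 1) = M - m' := by
        rw [hT, div_mul_cancel₀ _ (by linarith : Real.exp ε - 1 ≠ 0)]
      nlinarith
    have : f b ≤ ε := by
      rw [hf]
      simp only
      rw [Real.log_one] at h2'
      linarith
    exact this
  obtain ⟨a, haM, hfa⟩ := hbound_a
  obtain ⟨b, hab, hfb⟩ := hbound_b a haM
  have hcont : ContinuousOn f (Set.Icc a b) := fun ν hν =>
    (deriv_formula p V S hpS hSne ν (hposV ν (lt_of_lt_of_le haM hν.1))).continuousAt.continuousWithinAt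
  have hIVT := intermediate_value_Icc' hab hcont
  obtain ⟨ν, hνmem, hfν⟩ := hIVT ⟨hfb, hfa⟩
  have hνM : M < ν := lt_of_lt_of_le haM hνmem.1
  refine ⟨ν, ⟨fun i hpi => lt_of_le_of_lt (hMmax i hpi) hνM, hfν⟩, ?_⟩
  rintro y ⟨hy1, hy2⟩
  have hyM : M < y := hVi₀ ▸ hy1 i₀ hpi₀
  exact hanti.injOn hyM hνM (hy2.trans hfν.symm)
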